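/- For any nonempty event E, there exists some state ω ∈ E such that the maximally evident C-indicating superset of E is equal to the maximally evident C-indicating superset of the singleton {ω}. -/
import Mathlib


open Finset

variable {Ω : Type*}

/-- The conditional probability `P_i(E | ω) = μ(E ∩ Π_i(ω)) / μ(Π_i(ω))`,
where `part i ω` is the cell of player `i`'s information partition containing `ω`. -/
noncomputable def condP [Fintype Ω] [DecidableEq Ω] (μ : Ω → ℝ)
    (part : Fin 2 → Ω → Finset Ω) (i : Fin 2) (E : Finset Ω) (ω : Ω) : ℝ :=
  (∑ x ∈ E ∩ part i ω, μ x) / (∑ x ∈ part i ω, μ x)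

/-- `E` is `p`-evident: every player `p`-believes `E` at every state of `E`. -/
def pEvident [Fintype Ω] [DecidableEq Ω] (μ : Ω → ℝ)
    (part : Fin 2 → Ω → Finset Ω) (p : ℝ) (E : Finset Ω) : Prop :=
  ∀ i : Fin 2, ∀ ω ∈ E, p ≤ condP μ part i E ω

/-- `E` is a `p`-evident `C`-indicating event. -/
def pEvidentInd [Fintype Ω] [DecidableEq Ω] (μ : Ω → ℝ)
    (part : Fin 2 → Ω → Finset Ω) (p : ℝ) (C E : Finset Ω) : Prop :=
  pEvident μ part p E ∧ ∀ i : Fin 2, ∀ ω ∈ E, p ≤ condP μ part i C ω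

/-- `E` is the largest `p`-evident `C`-indicating event. -/
def isLargestInd [Fintype Ω] [DecidableEq Ω] (μ : Ω → ℝ)
    (part : Fin 2 → Ω → Finset Ω) (p : ℝ) (C E : Finset Ω) : Prop :=
  pEvidentInd μ part p C E ∧ ∀ F : Finset Ω, pEvidentInd μ part p C F → F ⊆ E

/-- `p` is the `C`-evidence level of `E`: the maximum `q` for which `E` is a
`q`-evident `C`-indicating event. -/
def isEvidenceLevel [Fintype Ω] [DecidableEq Ω] (μ : Ω → ℝ)
    (part : Fin 2 → Ω → Finset Ω) (C E : Finset Ω) (p : ℝ) : Prop :=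
  IsGreatest {q : ℝ | pEvidentInd μ part q C E} p

/-- `G` is the maximally evident `C`-indicating superset of `F`. -/
def isMaxEvidentSup [Fintype Ω] [DecidableEq Ω] (μ : Ω → ℝ)
    (part : Fin 2 → Ω → Finset Ω) (C F G : Finset Ω) : Prop :=
  F ⊆ G ∧ ∃ p : ℝ, isEvidenceLevel μ part C G p ∧ isLargestInd μ part p C G ∧
    ∀ H : Finset Ω, F ⊆ H → ∀ q : ℝ, isEvidenceLevel μ part C H q → q ≤ p

/-- `E` is a maximally evident `C`-indicating event: it is the maximally evident
`C`-indicating superset of some nonempty event. -/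
def isMaxEvident [Fintype Ω] [DecidableEq Ω] (μ : Ω → ℝ)
    (part : Fin 2 → Ω → Finset Ω) (C E : Finset Ω) : Prop :=
  ∃ F : Finset Ω, F.Nonempty ∧ isMaxEvidentSup μ part C F E

/-- `E` is a super-`p`-evident `C`-indicating event. -/
def superEvidentInd [Fintype Ω] [DecidableEq Ω] (μ : Ω → ℝ)
    (part : Fin 2 → Ω → Finset Ω) (p : ℝ) (C E : Finset Ω) : Prop :=
  ∀ i : Fin 2, ∀ ω ∈ E, p < condP μ part i E ω ∧ p < condP μ part i C ω

/-- `E` is the largest super-evident `C`-indicating subset of `F`. -/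
def isLargestSuperSub [Fintype Ω] [DecidableEq Ω] (μ : Ω → ℝ)
    (part : Fin 2 → Ω → Finset Ω) (C F E : Finset Ω) : Prop :=
  E ⊆ F ∧ ∃ p : ℝ, isEvidenceLevel μ part C F p ∧ superEvidentInd μ part p C E ∧
    ∀ G : Finset Ω, G ⊆ F → superEvidentInd μ part p C G → G ⊆ E

section Aux

variable [Fintype Ω] [DecidableEq Ω] (μ : Ω → ℝ) (part : Fin 2 → Ω → Finset Ω)

lemma condP_mono (hμpos : ∀ ω : Ω, 0 < μ ω) (hmem : ∀ (i : Fin 2) (ω : Ω), ω ∈ part i ω)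
    (i : Fin 2) {E E' : Finset Ω} (h : E ⊆ E') (ω : Ω) :
    condP μ part i E ω ≤ condP μ part i E' ω := by
  unfold condP
  have hd : (0:ℝ) < ∑ x ∈ part i ω, μ x :=
    Finset.sum_pos (fun x _ => hμpos x) ⟨ω, hmem i ω⟩
  have hnum : ∑ x ∈ E ∩ part i ω, μ x ≤ ∑ x ∈ E' ∩ part i ω, μ x :=
    Finset.sum_le_sum_of_subset_of_nonneg
      (Finset.inter_subset_inter h Finset.Subset.rfl)
      (fun x _ _ => (hμpos x).le)
  exact (div_le_div_iff_of_pos_right hd).mpr hnum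

/-- Auxiliary: the `C`-evidence level of a nonempty event. -/
noncomputable def lvl (C H : Finset Ω) : ℝ :=
  if hH : H.Nonempty then
    H.inf' hH (fun ω => min (min (condP μ part 0 H ω) (condP μ part 0 C ω))
                            (min (condP μ part 1 H ω) (condP μ part 1 C ω)))
  else 0

lemma pEvidentInd_iff_le_lvl {C H : Finset Ω} (hH : H.Nonempty) (q : ℝ) :
    pEvidentInd μ part q C H ↔ q ≤ lvl μ part C H := by
  rw [lvl, dif_pos hH, Finset.le_inf'_iff]
  constructor
  · rintro ⟨h1, h2⟩ ω hω
    simp only [le_min_iff]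
    exact ⟨⟨h1 0 ω hω, h2 0 ω hω⟩, h1 1 ω hω, h2 1 ω hω⟩
  · intro h
    constructor
    · intro i ω hω
      have h' := h ω hω
      simp only [le_min_iff] at h'
      fin_cases i
      · exact h'.1.1
      · exact h'.2.1
    · intro i ω hω
      have h' := h ω hω
      simp only [le_min_iff] at h'
      fin_cases i
      · exact h'.1.2
      · exact h'.2.2

lemma isEvidenceLevel_iff {C H : Finset Ω} (hH : H.Nonempty) (p : ℝ) :
    isEvidenceLevel μ part C H p ↔ p = lvl μ part C H := by
  constructor
  · rintro ⟨hp, hub⟩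
    exact le_antisymm ((pEvidentInd_iff_le_lvl μ part hH p).mp hp)
      (hub ((pEvidentInd_iff_le_lvl μ part hH _).mpr le_rfl))
  · rintro rfl
    exact ⟨(pEvidentInd_iff_le_lvl μ part hH _).mpr le_rfl,
      fun q hq => (pEvidentInd_iff_le_lvl μ part hH q).mp hq⟩

lemma pEvidentInd_anti {C H : Finset Ω} {p q : ℝ} (hpq : q ≤ p)
    (h : pEvidentInd μ part p C H) : pEvidentInd μ part q C H :=
  ⟨fun i ω hω => hpq.trans (h.1 i ω hω), fun i ω hω => hpq.trans (h.2 i ω hω)⟩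

open Classical in
/-- Auxiliary: the union of all `p`-evident `C`-indicating events. -/
noncomputable def bigU (p : ℝ) (C : Finset Ω) : Finset Ω :=
  Finset.univ.filter (fun ω => ∃ H : Finset Ω, pEvidentInd μ part p C H ∧ ω ∈ H)

lemma mem_bigU {p : ℝ} {C : Finset Ω} {ω : Ω} :
    ω ∈ bigU μ part p C ↔ ∃ H : Finset Ω, pEvidentInd μ part p C H ∧ ω ∈ H := by
  simp [bigU]

lemma subset_bigU {p : ℝ} {C H : Finset Ω} (h : pEvidentInd μ part p C H) :
    H ⊆ bigU μ part p C :=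
  fun ω hω => (mem_bigU μ part).mpr ⟨H, h, hω⟩

lemma bigU_pEvidentInd (hμpos : ∀ ω : Ω, 0 < μ ω)
    (hmem : ∀ (i : Fin 2) (ω : Ω), ω ∈ part i ω) (p : ℝ) (C : Finset Ω) :
    pEvidentInd μ part p C (bigU μ part p C) := by
  constructor
  · intro i ω hω
    obtain ⟨H, hH, hωH⟩ := (mem_bigU μ part).mp hω
    exact (hH.1 i ω hωH).trans
      (condP_mono μ part hμpos hmem i (subset_bigU μ part hH) ω)
  · intro i ω hω
    obtain ⟨H, hH, hωH⟩ := (mem_bigU μ part).mp hω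
    exact hH.2 i ω hωH

/-- Auxiliary: the maximal `C`-evidence level over supersets of `F`. -/
noncomputable def pstar (C F : Finset Ω) : ℝ :=
  (Finset.univ.powerset.filter (fun H => F ⊆ H)).sup'
    ⟨Finset.univ, by simp⟩ (lvl μ part C)

lemma lvl_le_pstar {C F H : Finset Ω} (h : F ⊆ H) :
    lvl μ part C H ≤ pstar μ part C F :=
  Finset.le_sup' _ (by simp [Finset.mem_filter, h])

lemma exists_pstar (C F : Finset Ω) :
    ∃ H : Finset Ω, F ⊆ H ∧ lvl μ part C H = pstar μ part C F := by
  obtain ⟨H, hH, hval⟩ := Finset.exists_mem_eq_sup'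
    (⟨Finset.univ, by simp⟩ : ((Finset.univ.powerset.filter (fun H => F ⊆ H)) : Finset (Finset Ω)).Nonempty)
    (lvl μ part C)
  exact ⟨H, (Finset.mem_filter.mp hH).2, hval.symm⟩

lemma maxSup_bigU (hμpos : ∀ ω : Ω, 0 < μ ω)
    (hmem : ∀ (i : Fin 2) (ω : Ω), ω ∈ part i ω) {C F : Finset Ω} (hF : F.Nonempty) :
    isMaxEvidentSup μ part C F (bigU μ part (pstar μ part C F) C) := by
  set p := pstar μ part C F with hp
  set G := bigU μ part p C with hG
  obtain ⟨H₀, hFH₀, hH₀⟩ := exists_pstar μ part C F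
  have hH₀ne : H₀.Nonempty := hF.mono hFH₀
  have hH₀ev : pEvidentInd μ part p C H₀ :=
    (pEvidentInd_iff_le_lvl μ part hH₀ne p).mpr (le_of_eq hH₀.symm)
  have hFG : F ⊆ G := hFH₀.trans (subset_bigU μ part hH₀ev)
  have hGne : G.Nonempty := hF.mono hFG
  have hGev : pEvidentInd μ part p C G := bigU_pEvidentInd μ part hμpos hmem p C
  have hlvlG : lvl μ part C G = p :=
    le_antisymm (lvl_le_pstar μ part hFG) ((pEvidentInd_iff_le_lvl μ part hGne p).mp hGev)
  refine ⟨hFG, p, (isEvidenceLevel_iff μ part hGne p).mpr hlvlG.symm,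
    ⟨hGev, fun F' hF' => subset_bigU μ part hF'⟩, ?_⟩
  intro H hFH q hq
  have hHne : H.Nonempty := hF.mono hFH
  rw [isEvidenceLevel_iff μ part hHne] at hq
  exact hq.le.trans (lvl_le_pstar μ part hFH)

end Aux

/-- For any nonempty event `E` there is a state `ω ∈ E` whose singleton has the same
maximally evident `C`-indicating superset as `E`. -/
theorem maxEvidentSup_reduction [Fintype Ω] [DecidableEq Ω] [Nonempty Ω]
    (μ : Ω → ℝ) (part : Fin 2 → Ω → Finset Ω)
    (hμpos : ∀ ω : Ω, 0 < μ ω) (hμsum : ∑ ω : Ω, μ ω = 1)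
    (hmem : ∀ (i : Fin 2) (ω : Ω), ω ∈ part i ω)
    (hcell : ∀ (i : Fin 2) (ω ω' : Ω), ω' ∈ part i ω → part i ω' = part i ω)
    (C E : Finset Ω) (hE : E.Nonempty) :
    ∃ ω ∈ E, ∃ G : Finset Ω,
      isMaxEvidentSup μ part C E G ∧ isMaxEvidentSup μ part C {ω} G := by
  classical
  -- choose a state minimizing the singleton evidence level
  obtain ⟨ω0, hω0E, hmin⟩ := E.exists_min_image (fun ω => pstar μ part C {ω}) hE
  refine ⟨ω0, hω0E, bigU μ part (pstar μ part C E) C, ?_⟩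
  have hge : pstar μ part C E ≤ pstar μ part C {ω0} := by
    obtain ⟨H₀, hEH₀, hH₀⟩ := exists_pstar μ part C E
    have : ({ω0} : Finset Ω) ⊆ H₀ := Finset.singleton_subset_iff.mpr (hEH₀ hω0E)
    calc pstar μ part C E = lvl μ part C H₀ := hH₀.symm
      _ ≤ pstar μ part C {ω0} := lvl_le_pstar μ part this
  have hle : pstar μ part C {ω0} ≤ pstar μ part C E := by
    set q := pstar μ part C {ω0} with hq
    have hEG' : E ⊆ bigU μ part q C := by
      intro ω hω
      have hsub : ({ω} : Finset Ω) ⊆ bigU μ part (pstar μ part C {ω}) C :=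
        (maxSup_bigU μ part hμpos hmem (Finset.singleton_nonempty ω)).1
      obtain ⟨H, hH, hωH⟩ := (mem_bigU μ part).mp (hsub (Finset.mem_singleton_self ω))
      exact (mem_bigU μ part).mpr ⟨H, pEvidentInd_anti μ part (hmin ω hω) hH, hωH⟩
    have hG'ne : (bigU μ part q C).Nonempty := hE.mono hEG'
    calc q ≤ lvl μ part C (bigU μ part q C) :=
          (pEvidentInd_iff_le_lvl μ part hG'ne q).mp (bigU_pEvidentInd μ part hμpos hmem q C)
      _ ≤ pstar μ part C E := lvl_le_pstar μ part hEG'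
  have heq : pstar μ part C {ω0} = pstar μ part C E := le_antisymm hle hge
  constructor
  · exact maxSup_bigU μ part hμpos hmem hE
  · have := maxSup_bigU μ part hμpos hmem (C := C) (Finset.singleton_nonempty ω0)
    rwa [heq] at this
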